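/- For every integer k ≥ 5, there exist real numbers λs, λc, λu, each a root of p_k, such that 0 < λs < 1/k < 1 + 1/k < λc < 2 < k/2 < λu < k; moreover every complex root of p_k equals one of λs, λc, λu. In particular, for k ≥ 5 the matrix A_k has three distinct real eigenvalues, none of which has absolute value 1. -/
import Mathlib


/-- For an integer `k`, the matrix `A_k` with rows `(k-1, -1, -1)`, `(1, 1, 0)`, `(1, 0, 0)`. -/
def Amat (k : ℤ) : Matrix (Fin 3) (Fin 3) ℤ :=
  !![k - 1, -1, -1; 1, 1, 0; 1, 0, 0]

/-- The characteristic polynomial `p_k(x) = x^3 - k x^2 + (k+1) x - 1` of `A_k`,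
evaluated in any commutative ring. -/
def pk {R : Type*} [CommRing R] (k : ℤ) (x : R) : R :=
  x ^ 3 - (k : R) * x ^ 2 + ((k : R) + 1) * x - 1

lemma pk_eig (k : ℤ) (x : ℝ) (hx : pk k x = 0) :
    Module.End.HasEigenvalue (Matrix.toLin' ((Amat k).map (Int.cast : ℤ → ℝ))) x := by
  unfold pk at hx
  have hx1 : x - 1 ≠ 0 := by
    intro h
    have : x = 1 := by linarith [sub_eq_zero.mp h]
    rw [this] at hx; ring_nf at hx; norm_num at hx
  apply Module.End.hasEigenvalue_of_hasEigenvector (x := ![x * (x - 1), x, x - 1])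
  constructor
  · rw [Module.End.mem_eigenspace_iff, Matrix.toLin'_apply]
    funext i
    fin_cases i <;>
      simp [Amat, Matrix.mulVec, dotProduct, Fin.sum_univ_three] <;>
      nlinarith [hx, sq_nonneg x]
  · intro h
    have := congrFun h 2
    simp [hx1] at this

/-- For every integer `k ≥ 5` there are real roots `λs, λc, λu` of `p_k` with
`0 < λs < 1/k < 1 + 1/k < λc < 2 < k/2 < λu < k`, and every complex root of `p_k` is one of
them.  In particular `A_k` has three distinct real eigenvalues, none of absolute value `1`. -/
theorem roots_of_pk (k : ℤ) (hk : 5 ≤ k) :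
    ∃ ls lc lu : ℝ,
      pk k ls = 0 ∧ pk k lc = 0 ∧ pk k lu = 0 ∧
      0 < ls ∧ ls < 1 / (k : ℝ) ∧ 1 / (k : ℝ) < 1 + 1 / (k : ℝ) ∧ 1 + 1 / (k : ℝ) < lc ∧
      lc < 2 ∧ (2 : ℝ) < (k : ℝ) / 2 ∧ (k : ℝ) / 2 < lu ∧ lu < (k : ℝ) ∧
      (∀ z : ℂ, pk k z = 0 → z = (ls : ℂ) ∨ z = (lc : ℂ) ∨ z = (lu : ℂ)) ∧
      ls ≠ lc ∧ lc ≠ lu ∧ ls ≠ lu ∧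
      |ls| ≠ 1 ∧ |lc| ≠ 1 ∧ |lu| ≠ 1 ∧
      Module.End.HasEigenvalue (Matrix.toLin' ((Amat k).map (Int.cast : ℤ → ℝ))) ls ∧
      Module.End.HasEigenvalue (Matrix.toLin' ((Amat k).map (Int.cast : ℤ → ℝ))) lc ∧
      Module.End.HasEigenvalue (Matrix.toLin' ((Amat k).map (Int.cast : ℤ → ℝ))) lu := by
  have hK : (5 : ℝ) ≤ (k : ℝ) := by exact_mod_cast hk
  set K : ℝ := (k : ℝ) with hKdef
  have hK0 : (0 : ℝ) < K := by linarith
  have hKne : K ≠ 0 := ne_of_gt hK0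
  have hcont : Continuous (fun x : ℝ => pk k x) := by unfold pk; fun_prop
  -- sign values
  have h0 : pk k (0 : ℝ) = -1 := by unfold pk; ring
  have h1k : pk k (1 / K) = 1 / K ^ 3 := by unfold pk; field_simp; ring
  have h1k' : (0:ℝ) < pk k (1 / K) := by rw [h1k]; positivity
  have h11k : (0:ℝ) < pk k (1 + 1 / K) := by
    have : pk k (1 + 1 / K) = (3 * K ^ 2 + 3 * K + 1) / K ^ 3 := by
      unfold pk; field_simp; ring
    rw [this]; positivity
  have h2 : pk k (2 : ℝ) < 0 := by
    have : pk k (2 : ℝ) = 9 - 2 * K := by unfold pk; ring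
    rw [this]; linarith
  have hk2 : pk k (K / 2) < 0 := by
    have : pk k (K / 2) = -K ^ 3 / 8 + K ^ 2 / 2 + K / 2 - 1 := by unfold pk; ring
    rw [this]; nlinarith
  have hkk : (0:ℝ) < pk k K := by
    have : pk k K = K ^ 2 + K - 1 := by unfold pk; ring
    rw [this]; nlinarith
  -- IVT
  have ivt1 : ∃ x ∈ Set.Ioo (0 : ℝ) (1 / K), pk k x = 0 := by
    have h := intermediate_value_Ioo (by positivity : (0:ℝ) ≤ 1 / K) hcont.continuousOn
    have : (0:ℝ) ∈ Set.Ioo (pk k (0:ℝ)) (pk k (1 / K)) := by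
      rw [h0]; exact ⟨by norm_num, h1k'⟩
    obtain ⟨x, hx, hfx⟩ := h this
    exact ⟨x, hx, hfx⟩
  have ivt2 : ∃ x ∈ Set.Ioo (1 + 1 / K) (2 : ℝ), pk k x = 0 := by
    have hle : (1 + 1 / K : ℝ) ≤ 2 := by
      have : 1 / K ≤ 1 := by rw [div_le_one hK0]; linarith
      linarith
    have h := intermediate_value_Ioo' hle hcont.continuousOn
    obtain ⟨x, hx, hfx⟩ := h ⟨h2, h11k⟩
    exact ⟨x, hx, hfx⟩
  have ivt3 : ∃ x ∈ Set.Ioo (K / 2) K, pk k x = 0 := by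
    have hle : K / 2 ≤ K := by linarith
    have h := intermediate_value_Ioo hle hcont.continuousOn
    obtain ⟨x, hx, hfx⟩ := h ⟨hk2, hkk⟩
    exact ⟨x, hx, hfx⟩
  obtain ⟨ls, ⟨hls1, hls2⟩, hlsr⟩ := ivt1
  obtain ⟨lc, ⟨hlc1, hlc2⟩, hlcr⟩ := ivt2
  obtain ⟨lu, ⟨hlu1, hlu2⟩, hlur⟩ := ivt3
  have hKinv : (0:ℝ) < 1 / K := by positivity
  have hKinvlt : 1 / K ≤ 1 / 5 := by
    apply div_le_div_of_nonneg_left <;> linarith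
  -- order facts
  have o1 : ls < lc := by linarith
  have o2 : lc < lu := by linarith
  have o3 : ls < lu := by linarith
  refine ⟨ls, lc, lu, hlsr, hlcr, hlur, hls1, hls2, by linarith, hlc1, hlc2,
    by linarith, hlu1, hlu2, ?_, ne_of_lt o1, ne_of_lt o2, ne_of_lt o3,
    ?_, ?_, ?_, pk_eig k ls hlsr, pk_eig k lc hlcr, pk_eig k lu hlur⟩
  · -- all complex roots
    unfold pk at hlsr hlcr hlur
    -- pairwise quadratic relations
    have q1 : ls ^ 2 + ls * lc + lc ^ 2 - K * (ls + lc) + (K + 1) = 0 := by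
      have h : (ls - lc) * (ls ^ 2 + ls * lc + lc ^ 2 - K * (ls + lc) + (K + 1)) = 0 := by
        linear_combination hlsr - hlcr
      rcases mul_eq_zero.mp h with h' | h'
      · exact absurd (by linarith [sub_eq_zero.mp h'] : ls = lc) (ne_of_lt o1)
      · exact h'
    have q2 : lc ^ 2 + lc * lu + lu ^ 2 - K * (lc + lu) + (K + 1) = 0 := by
      have h : (lc - lu) * (lc ^ 2 + lc * lu + lu ^ 2 - K * (lc + lu) + (K + 1)) = 0 := by
        linear_combination hlcr - hlur
      rcases mul_eq_zero.mp h with h' | h'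
      · exact absurd (by linarith [sub_eq_zero.mp h'] : lc = lu) (ne_of_lt o2)
      · exact h'
    have he1 : ls + lc + lu = K := by
      have h : (ls - lu) * (ls + lc + lu - K) = 0 := by linear_combination q1 - q2
      rcases mul_eq_zero.mp h with h' | h'
      · exact absurd (by linarith [sub_eq_zero.mp h'] : ls = lu) (ne_of_lt o3)
      · linarith [sub_eq_zero.mp h']
    have he2 : ls * lc + ls * lu + lc * lu = K + 1 := by
      linear_combination (ls + lc) * he1 - q1
    have he3 : ls * lc * lu = 1 := by
      linear_combination hlsr - ls ^ 2 * he1 + ls * he2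
    intro z hz
    unfold pk at hz
    have hzC : (z - (ls : ℂ)) * (z - (lc : ℂ)) * (z - (lu : ℂ)) = 0 := by
      have c1 : ((ls : ℂ) + lc + lu) = (K : ℂ) := by exact_mod_cast congrArg (Complex.ofReal) he1
      have c2 : ((ls : ℂ) * lc + ls * lu + lc * lu) = (K : ℂ) + 1 := by
        exact_mod_cast congrArg (Complex.ofReal) he2
      have c3 : ((ls : ℂ) * lc * lu) = 1 := by exact_mod_cast congrArg (Complex.ofReal) he3
      have hKC : (K : ℂ) = ((k : ℤ) : ℂ) := by rw [hKdef]; push_cast; ring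
      rw [hKC] at c1 c2
      linear_combination hz - z ^ 2 * c1 + z * c2 - c3
    rcases mul_eq_zero.mp hzC with h | h
    · rcases mul_eq_zero.mp h with h' | h'
      · exact Or.inl (sub_eq_zero.mp h')
      · exact Or.inr (Or.inl (sub_eq_zero.mp h'))
    · exact Or.inr (Or.inr (sub_eq_zero.mp h))
  · rw [abs_of_pos hls1]; intro h; rw [h] at hls2; linarith
  · have : 1 < lc := by linarith
    rw [abs_of_pos (by linarith)]; intro h; linarith [h ▸ this]
  · have : 1 < lu := by linarith
    rw [abs_of_pos (by linarith)]; intro h; linarith [h ▸ this]
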